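/- arXiv:2105.01942 — 4 statements merged into one kernel-verified Lean document; each statement's English description precedes it below -/
import Mathlib

section
/- Let V: ℝⁿ × [0,T] → ℝ be continuously differentiable and a classical solution of the HJB equation −∂V/∂t = f·∇ₓV − ½|g(x)ᵀ∇ₓV|². Let u: [t,T] → ℝᵐ be continuous and let x: [t,T] → ℝⁿ be differentiable with x′(s) = f(x(s)) + g(x(s))u(s) for all s. Then for every s ∈ (t,T), d/ds V(x(s),s) = −½|u(s)|² + ½|u(s) + g(x(s))ᵀ∇ₓV(x(s),s)|². -/
open Matrix

/-- The continuous linear map `(v, τ) ↦ a ⬝ᵥ v + b * τ`, representing the total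
derivative of a function `V(x,t)` with spatial gradient `a` and time derivative `b`. -/
noncomputable def pairDerivCLM {n : ℕ} (a : Fin n → ℝ) (b : ℝ) :
    ((Fin n → ℝ) × ℝ) →L[ℝ] ℝ :=
  LinearMap.toContinuousLinearMap
    { toFun := fun vτ => a ⬝ᵥ vτ.1 + b * vτ.2
      map_add' := by intro v w; simp [dotProduct_add]; ring
      map_smul' := by intro c v; simp [dotProduct_smul]; ring }

/-- Along a solution of the control system `x' = f(x) + g(x)u`, a classical solution `V`
of the HJB equation `-∂V/∂t = f·∇ₓV - ½|gᵀ∇ₓV|²` satisfies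
`d/ds V(x(s),s) = -½|u(s)|² + ½|u(s) + g(x(s))ᵀ∇ₓV(x(s),s)|²`. -/
theorem hjb_derivative_along_trajectory
    (n m : ℕ) (T t : ℝ) (ht : 0 ≤ t) (hT : t < T)
    (f : (Fin n → ℝ) → (Fin n → ℝ)) (g : (Fin n → ℝ) → Matrix (Fin n) (Fin m) ℝ)
    (hf : Continuous f) (hg : Continuous g)
    (V Vt : (Fin n → ℝ) → ℝ → ℝ) (gradV : (Fin n → ℝ) → ℝ → (Fin n → ℝ))
    -- `V` is differentiable with spatial gradient `gradV` and time derivative `Vt` ...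
    (hV : ∀ (x : Fin n → ℝ), ∀ s ∈ Set.Icc (0 : ℝ) T,
      HasFDerivAt (fun p : (Fin n → ℝ) × ℝ => V p.1 p.2)
        (pairDerivCLM (gradV x s) (Vt x s)) (x, s))
    -- ... and continuously so:
    (hC1 : ContinuousOn (fun p : (Fin n → ℝ) × ℝ => (gradV p.1 p.2, Vt p.1 p.2))
      ((Set.univ : Set (Fin n → ℝ)) ×ˢ Set.Icc (0 : ℝ) T))
    -- `V` is a classical solution of the HJB equation `-∂V/∂t = f·∇ₓV - ½|gᵀ∇ₓV|²`:
    (hHJB : ∀ (x : Fin n → ℝ), ∀ s ∈ Set.Icc (0 : ℝ) T,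
      -(Vt x s) = f x ⬝ᵥ gradV x s
        - (1/2) * (((g x)ᵀ *ᵥ gradV x s) ⬝ᵥ ((g x)ᵀ *ᵥ gradV x s)))
    -- a continuous control and a corresponding trajectory:
    (u : ℝ → Fin m → ℝ) (hu : ContinuousOn u (Set.Icc t T))
    (x : ℝ → Fin n → ℝ)
    (hx : ∀ s ∈ Set.Icc t T, HasDerivAt x (f (x s) + (g (x s)) *ᵥ u s) s) :
    ∀ s ∈ Set.Ioo t T,
      HasDerivAt (fun r => V (x r) r)
        (-(1/2) * (u s ⬝ᵥ u s)
          + (1/2) * ((u s + (g (x s))ᵀ *ᵥ gradV (x s) s) ⬝ᵥ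
              (u s + (g (x s))ᵀ *ᵥ gradV (x s) s))) s := by
  intro s hs
  have hsIcc : s ∈ Set.Icc t T := ⟨hs.1.le, hs.2.le⟩
  have hs0T : s ∈ Set.Icc (0 : ℝ) T := ⟨le_trans ht hs.1.le, hs.2.le⟩
  -- derivative of r ↦ (x r, r)
  have hpair : HasDerivAt (fun r => ((x r, r) : (Fin n → ℝ) × ℝ))
      (f (x s) + (g (x s)) *ᵥ u s, 1) s :=
    (hx s hsIcc).prodMk (hasDerivAt_id s)
  have hcomp : HasDerivAt (fun r => V (x r) r)
      ((pairDerivCLM (gradV (x s) s) (Vt (x s) s))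
        (f (x s) + (g (x s)) *ᵥ u s, 1)) s :=
    HasFDerivAt.comp_hasDerivAt (f := fun r => ((x r, r) : (Fin n → ℝ) × ℝ)) s (hV (x s) s hs0T) hpair
  have key : (pairDerivCLM (gradV (x s) s) (Vt (x s) s))
        (f (x s) + (g (x s)) *ᵥ u s, 1)
      = -(1/2) * (u s ⬝ᵥ u s)
          + (1/2) * ((u s + (g (x s))ᵀ *ᵥ gradV (x s) s) ⬝ᵥ
              (u s + (g (x s))ᵀ *ᵥ gradV (x s) s)) := by
    have hVt : Vt (x s) s = -(f (x s) ⬝ᵥ gradV (x s) s)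
        + (1/2) * (((g (x s))ᵀ *ᵥ gradV (x s) s) ⬝ᵥ ((g (x s))ᵀ *ᵥ gradV (x s) s)) := by
      have := hHJB (x s) s hs0T
      linarith
    have hdm : gradV (x s) s ⬝ᵥ ((g (x s)) *ᵥ u s)
        = ((g (x s))ᵀ *ᵥ gradV (x s) s) ⬝ᵥ u s := by
      rw [Matrix.dotProduct_mulVec, Matrix.mulVec_transpose]
    set a := gradV (x s) s
    set w := (g (x s))ᵀ *ᵥ a with hw
    simp only [pairDerivCLM, LinearMap.coe_toContinuousLinearMap',
      LinearMap.coe_mk, AddHom.coe_mk]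
    rw [dotProduct_add, hdm, hVt]
    have h1 : (u s + w) ⬝ᵥ (u s + w) = u s ⬝ᵥ u s + 2 * (w ⬝ᵥ u s) + w ⬝ᵥ w := by
      rw [dotProduct_add, add_dotProduct, add_dotProduct,
        dotProduct_comm (u s) w]
      ring
    rw [h1, dotProduct_comm a (f (x s))]; ring
  rw [key] at hcomp
  exact hcomp
end

section
/- Let V: ℝⁿ × [0,T] → ℝ be continuously differentiable and a classical solution of the HJB equation −∂V/∂t = f·∇ₓV − ½|g(x)ᵀ∇ₓV|². Let u: [t,T] → ℝᵐ be continuous and let x: [t,T] → ℝⁿ be differentiable with x′(s) = f(x(s)) + g(x(s))u(s) for all s. Then V(x(t),t) ≤ ½∫ₜᵀ |u(s)|² ds + V(x(T),T). -/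
open Matrix

private lemma contOn_dotProduct {k : ℕ} {α : Type*} [TopologicalSpace α] {s : Set α}
    {v w : α → Fin k → ℝ} (hv : ContinuousOn v s) (hw : ContinuousOn w s) :
    ContinuousOn (fun y => v y ⬝ᵥ w y) s := by
  simp only [dotProduct]
  exact continuousOn_finset_sum _ fun i _ =>
    ((continuous_apply i).comp_continuousOn hv).mul ((continuous_apply i).comp_continuousOn hw)

/-- Along a solution of the control system `x' = f(x) + g(x)u`, a classical solution `V`
of the HJB equation `-∂V/∂t = f·∇ₓV - ½|gᵀ∇ₓV|²` satisfies
`V(x(t),t) ≤ ½∫ₜᵀ |u(s)|² ds + V(x(T),T)`. -/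
theorem hjb_verification_inequality
    (n m : ℕ) (T t : ℝ) (ht : 0 ≤ t) (hT : t < T)
    (f : (Fin n → ℝ) → (Fin n → ℝ)) (g : (Fin n → ℝ) → Matrix (Fin n) (Fin m) ℝ)
    (hf : Continuous f) (hg : Continuous g)
    (V Vt : (Fin n → ℝ) → ℝ → ℝ) (gradV : (Fin n → ℝ) → ℝ → (Fin n → ℝ))
    -- `V` is differentiable with spatial gradient `gradV` and time derivative `Vt` ...
    (hV : ∀ (x : Fin n → ℝ), ∀ s ∈ Set.Icc (0 : ℝ) T,
      HasFDerivAt (fun p : (Fin n → ℝ) × ℝ => V p.1 p.2)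
        (pairDerivCLM (gradV x s) (Vt x s)) (x, s))
    -- ... and continuously so:
    (hC1 : ContinuousOn (fun p : (Fin n → ℝ) × ℝ => (gradV p.1 p.2, Vt p.1 p.2))
      ((Set.univ : Set (Fin n → ℝ)) ×ˢ Set.Icc (0 : ℝ) T))
    -- `V` is a classical solution of the HJB equation `-∂V/∂t = f·∇ₓV - ½|gᵀ∇ₓV|²`:
    (hHJB : ∀ (x : Fin n → ℝ), ∀ s ∈ Set.Icc (0 : ℝ) T,
      -(Vt x s) = f x ⬝ᵥ gradV x s
        - (1/2) * (((g x)ᵀ *ᵥ gradV x s) ⬝ᵥ ((g x)ᵀ *ᵥ gradV x s)))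
    -- a continuous control and a corresponding trajectory:
    (u : ℝ → Fin m → ℝ) (hu : ContinuousOn u (Set.Icc t T))
    (x : ℝ → Fin n → ℝ)
    (hx : ∀ s ∈ Set.Icc t T, HasDerivAt x (f (x s) + (g (x s)) *ᵥ u s) s) :
    V (x t) t ≤ (1/2) * (∫ s in t..T, u s ⬝ᵥ u s) + V (x T) T := by
    -- setup
  have hsub : Set.Icc t T ⊆ Set.Icc (0:ℝ) T := fun s hs => ⟨le_trans ht hs.1, hs.2⟩
  set x' : ℝ → Fin n → ℝ := fun s => f (x s) + (g (x s)) *ᵥ u s with hx'def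
  have hxc : ContinuousOn x (Set.Icc t T) :=
    fun s hs => ((hx s hs).continuousAt).continuousWithinAt
  set G' : ℝ → ℝ := fun s => gradV (x s) s ⬝ᵥ x' s + Vt (x s) s with hG'def
  -- derivative of s ↦ V (x s) s
  have hG : ∀ s ∈ Set.uIcc t T, HasDerivAt (fun s => V (x s) s) (G' s) s := by
    intro s hs
    rw [Set.uIcc_of_le hT.le] at hs
    have hcurve : HasDerivAt (fun s => ((x s, s) : (Fin n → ℝ) × ℝ)) (x' s, 1) s :=
      (hx s hs).prodMk (hasDerivAt_id s)
    have := (hV (x s) s (hsub hs)).comp_hasDerivAt_of_eq s hcurve rfl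
    refine this.congr_deriv ?_
    simp [pairDerivCLM, G', LinearMap.toContinuousLinearMap]
  -- continuity of G' on [t, T]
  have hpair : ContinuousOn (fun s => (gradV (x s) s, Vt (x s) s)) (Set.Icc t T) := by
    apply hC1.comp (hxc.prodMk continuousOn_id)
    intro s hs
    exact ⟨Set.mem_univ _, hsub hs⟩
  have hgradc : ContinuousOn (fun s => gradV (x s) s) (Set.Icc t T) :=
    (continuous_fst.comp_continuousOn hpair)
  have hVtc : ContinuousOn (fun s => Vt (x s) s) (Set.Icc t T) :=
    (continuous_snd.comp_continuousOn hpair)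
  have hx'c : ContinuousOn x' (Set.Icc t T) := by
    apply ContinuousOn.add (hf.comp_continuousOn hxc)
    exact by
      have : ContinuousOn (fun s => (g (x s)) *ᵥ u s) (Set.Icc t T) := by
        apply continuousOn_pi.2
        intro i
        have hrow : ContinuousOn (fun s => (fun j => g (x s) i j)) (Set.Icc t T) :=
          continuousOn_pi.2 fun j =>
            ((Continuous.matrix_elem continuous_id i j).comp hg).comp_continuousOn hxc
        exact contOn_dotProduct hrow hu
      exact this
  have hG'c : ContinuousOn G' (Set.Icc t T) :=
    (contOn_dotProduct hgradc hx'c).add hVtc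
  have huu : ContinuousOn (fun s => u s ⬝ᵥ u s) (Set.Icc t T) := contOn_dotProduct hu hu
  -- integrability
  have hGint : IntervalIntegrable G' MeasureTheory.volume t T := by
    apply ContinuousOn.intervalIntegrable
    rwa [Set.uIcc_of_le hT.le]
  have huint : IntervalIntegrable (fun s => -((1/2) * (u s ⬝ᵥ u s))) MeasureTheory.volume t T := by
    apply ContinuousOn.intervalIntegrable
    rw [Set.uIcc_of_le hT.le]
    exact ((huu.const_smul ((1:ℝ)/2)).neg)
  -- FTC
  have hFTC : ∫ s in t..T, G' s = V (x T) T - V (x t) t :=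
    intervalIntegral.integral_eq_sub_of_hasDerivAt hG hGint
  -- pointwise bound
  have hpt : ∀ s ∈ Set.Icc t T, -((1/2) * (u s ⬝ᵥ u s)) ≤ G' s := by
    intro s hs
    have hhjb := hHJB (x s) s (hsub hs)
    set a := gradV (x s) s
    set q := (g (x s))ᵀ *ᵥ a with hq
    have hVt : Vt (x s) s = -(f (x s) ⬝ᵥ a) + (1/2) * (q ⬝ᵥ q) := by linarith
    have hsplit : a ⬝ᵥ x' s = a ⬝ᵥ f (x s) + q ⬝ᵥ u s := by
      rw [hx'def]
      simp only [dotProduct_add]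
      congr 1
      rw [Matrix.dotProduct_mulVec, hq, Matrix.mulVec_transpose]
    have hcomm : a ⬝ᵥ f (x s) = f (x s) ⬝ᵥ a := dotProduct_comm _ _
    have hkey : 0 ≤ q ⬝ᵥ u s + (1/2) * (q ⬝ᵥ q) + (1/2) * (u s ⬝ᵥ u s) := by
      have h2 : q ⬝ᵥ u s + (1/2) * (q ⬝ᵥ q) + (1/2) * (u s ⬝ᵥ u s)
          = (1/2) * ((q + u s) ⬝ᵥ (q + u s)) := by
        simp only [add_dotProduct, dotProduct_add]
        rw [dotProduct_comm (u s) q]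
        ring
      rw [h2]
      have : 0 ≤ (q + u s) ⬝ᵥ (q + u s) :=
        Finset.sum_nonneg fun i _ => mul_self_nonneg _
      linarith
    simp only [hG'def, hsplit, hVt, hcomm]
    linarith
  -- conclude
  have hmono : ∫ s in t..T, -((1/2) * (u s ⬝ᵥ u s)) ≤ ∫ s in t..T, G' s :=
    intervalIntegral.integral_mono_on hT.le huint hGint hpt
  have hlhs : ∫ s in t..T, -((1/2) * (u s ⬝ᵥ u s))
      = -((1/2) * ∫ s in t..T, u s ⬝ᵥ u s) := by
    rw [intervalIntegral.integral_neg, intervalIntegral.integral_const_mul]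
  rw [hlhs, hFTC] at hmono
  linarith
end

section
/- Let V: ℝⁿ × [0,T] → ℝ be continuously differentiable and a classical solution of the HJB equation −∂V/∂t = f·∇ₓV − ½|g(x)ᵀ∇ₓV|². Let u: [t,T] → ℝᵐ be continuous and let x: [t,T] → ℝⁿ be differentiable with x′(s) = f(x(s)) + g(x(s))u(s) for all s. Then V(x(t),t) = ½∫ₜᵀ |u(s)|² ds + V(x(T),T) holds if and only if u(s) = −g(x(s))ᵀ∇ₓV(x(s),s) for all s ∈ [t,T]; in particular the feedback control u*(s) = −g(x(s))ᵀ∇ₓV(x(s),s) attains equality. -/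
open Matrix

theorem dotSelf_nonneg {m : ℕ} (v : Fin m → ℝ) : 0 ≤ v ⬝ᵥ v :=
  Finset.sum_nonneg fun i _ => mul_self_nonneg _

set_option maxHeartbeats 1000000 in
/-- Along a solution of the control system `x' = f(x) + g(x)u`, a classical solution `V`
of the HJB equation `-∂V/∂t = f·∇ₓV - ½|gᵀ∇ₓV|²` satisfies
`V(x(t),t) = ½∫ₜᵀ |u(s)|² ds + V(x(T),T)` if and only if `u` is the feedback control
`u(s) = -g(x(s))ᵀ∇ₓV(x(s),s)` on `[t,T]`; in particular the feedback control attains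
equality. -/
theorem hjb_equality_iff_feedback_control
    (n m : ℕ) (T t : ℝ) (ht : 0 ≤ t) (hT : t < T)
    (f : (Fin n → ℝ) → (Fin n → ℝ)) (g : (Fin n → ℝ) → Matrix (Fin n) (Fin m) ℝ)
    (hf : Continuous f) (hg : Continuous g)
    (V Vt : (Fin n → ℝ) → ℝ → ℝ) (gradV : (Fin n → ℝ) → ℝ → (Fin n → ℝ))
    -- `V` is differentiable with spatial gradient `gradV` and time derivative `Vt` ...
    (hV : ∀ (x : Fin n → ℝ), ∀ s ∈ Set.Icc (0 : ℝ) T,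
      HasFDerivAt (fun p : (Fin n → ℝ) × ℝ => V p.1 p.2)
        (pairDerivCLM (gradV x s) (Vt x s)) (x, s))
    -- ... and continuously so:
    (hC1 : ContinuousOn (fun p : (Fin n → ℝ) × ℝ => (gradV p.1 p.2, Vt p.1 p.2))
      ((Set.univ : Set (Fin n → ℝ)) ×ˢ Set.Icc (0 : ℝ) T))
    -- `V` is a classical solution of the HJB equation `-∂V/∂t = f·∇ₓV - ½|gᵀ∇ₓV|²`:
    (hHJB : ∀ (x : Fin n → ℝ), ∀ s ∈ Set.Icc (0 : ℝ) T,
      -(Vt x s) = f x ⬝ᵥ gradV x s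
        - (1/2) * (((g x)ᵀ *ᵥ gradV x s) ⬝ᵥ ((g x)ᵀ *ᵥ gradV x s)))
    -- a continuous control and a corresponding trajectory:
    (u : ℝ → Fin m → ℝ) (hu : ContinuousOn u (Set.Icc t T))
    (x : ℝ → Fin n → ℝ)
    (hx : ∀ s ∈ Set.Icc t T, HasDerivAt x (f (x s) + (g (x s)) *ᵥ u s) s) :
    (V (x t) t = (1/2) * (∫ s in t..T, u s ⬝ᵥ u s) + V (x T) T ↔
      ∀ s ∈ Set.Icc t T, u s = -((g (x s))ᵀ *ᵥ gradV (x s) s)) := by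
  -- the feedback term
  set w : ℝ → Fin m → ℝ := fun s => (g (x s))ᵀ *ᵥ gradV (x s) s with hw
  set h : ℝ → ℝ := fun s => (u s + w s) ⬝ᵥ (u s + w s) with hhdef
  have hsub : ∀ s ∈ Set.Icc t T, s ∈ Set.Icc (0 : ℝ) T := fun s hs =>
    ⟨le_trans ht hs.1, hs.2⟩
  -- continuity facts
  have hxc : ContinuousOn x (Set.Icc t T) := fun s hs =>
    ((hx s hs).continuousAt).continuousWithinAt
  have hpair : ContinuousOn (fun s => ((x s : Fin n → ℝ), s)) (Set.Icc t T) :=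
    hxc.prodMk continuousOn_id
  have hmaps : Set.MapsTo (fun s => ((x s : Fin n → ℝ), s)) (Set.Icc t T)
      ((Set.univ : Set (Fin n → ℝ)) ×ˢ Set.Icc (0 : ℝ) T) := fun s hs =>
    ⟨Set.mem_univ _, hsub s hs⟩
  have hgrads : ContinuousOn (fun s => gradV (x s) s) (Set.Icc t T) := by
    have := (continuous_fst.comp_continuousOn (hC1.comp hpair hmaps))
    exact this
  have hmv : Continuous fun p : Matrix (Fin m) (Fin n) ℝ × (Fin n → ℝ) => p.1 *ᵥ p.2 :=
    Continuous.matrix_mulVec continuous_fst continuous_snd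
  have hdp : Continuous fun p : (Fin m → ℝ) × (Fin m → ℝ) => p.1 ⬝ᵥ p.2 :=
    Continuous.dotProduct continuous_fst continuous_snd
  have hwc : ContinuousOn w (Set.Icc t T) := by
    have hgT : ContinuousOn (fun s => (g (x s))ᵀ) (Set.Icc t T) :=
      (hg.matrix_transpose).comp_continuousOn hxc
    exact hmv.comp_continuousOn (hgT.prodMk hgrads)
  have huw : ContinuousOn (fun s => u s + w s) (Set.Icc t T) := hu.add hwc
  have hhc : ContinuousOn h (Set.Icc t T) := hdp.comp_continuousOn (huw.prodMk huw)
  have huuc : ContinuousOn (fun s => u s ⬝ᵥ u s) (Set.Icc t T) :=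
    hdp.comp_continuousOn (hu.prodMk hu)
  have hicc : Set.uIcc t T = Set.Icc t T := Set.uIcc_of_le hT.le
  have hInt_h : IntervalIntegrable h MeasureTheory.volume t T :=
    (hicc ▸ hhc).intervalIntegrable
  have hInt_u : IntervalIntegrable (fun s => u s ⬝ᵥ u s) MeasureTheory.volume t T :=
    (hicc ▸ huuc).intervalIntegrable
  -- derivative of s ↦ V (x s) s
  have key : ∀ s ∈ Set.Icc t T, HasDerivAt (fun s => V (x s) s)
      ((1/2) * h s - (1/2) * (u s ⬝ᵥ u s)) s := by
    intro s hs
    have hs0 := hsub s hs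
    have hxs : HasDerivAt (fun r => ((x r : Fin n → ℝ), r))
        (f (x s) + g (x s) *ᵥ u s, (1:ℝ)) s := (hx s hs).prodMk (hasDerivAt_id s)
    have hD := HasFDerivAt.comp_hasDerivAt (f := fun r => ((x r : Fin n → ℝ), r)) s
      (hV (x s) s hs0) hxs
    have hval : (pairDerivCLM (gradV (x s) s) (Vt (x s) s))
        (f (x s) + g (x s) *ᵥ u s, 1)
        = (1/2) * h s - (1/2) * (u s ⬝ᵥ u s) := by
      have hHeq := hHJB (x s) s hs0
      show gradV (x s) s ⬝ᵥ (f (x s) + g (x s) *ᵥ u s) + Vt (x s) s * 1 = _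
      have h1 : gradV (x s) s ⬝ᵥ (g (x s) *ᵥ u s) = u s ⬝ᵥ w s := by
        rw [Matrix.dotProduct_mulVec, ← Matrix.mulVec_transpose, hw,
          dotProduct_comm]
      have h2 : gradV (x s) s ⬝ᵥ f (x s) = f (x s) ⬝ᵥ gradV (x s) s :=
        dotProduct_comm _ _
      rw [dotProduct_add, h1, h2]
      have hVt : Vt (x s) s = -(f (x s) ⬝ᵥ gradV (x s) s) + (1/2) * (w s ⬝ᵥ w s) := by
        rw [hw]; linarith [hHJB (x s) s hs0]
      rw [hVt, hhdef]
      simp only [add_dotProduct, dotProduct_add]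
      rw [dotProduct_comm (w s) (u s)]
      ring
    rw [← hval]
    exact hD
  -- fundamental theorem of calculus
  have hFTC : (∫ s in t..T, ((1/2) * h s - (1/2) * (u s ⬝ᵥ u s)))
      = V (x T) T - V (x t) t := by
    exact intervalIntegral.integral_eq_sub_of_hasDerivAt
      (fun s hs => key s (hicc ▸ hs))
      ((hicc ▸ ((hhc.const_smul (1/2 : ℝ)).sub (huuc.const_smul (1/2 : ℝ)))).intervalIntegrable)
  have hsplit : (∫ s in t..T, ((1/2) * h s - (1/2) * (u s ⬝ᵥ u s)))
      = (1/2) * (∫ s in t..T, h s) - (1/2) * (∫ s in t..T, u s ⬝ᵥ u s) := by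
    rw [intervalIntegral.integral_sub (hInt_h.const_mul _) (hInt_u.const_mul _),
      intervalIntegral.integral_const_mul, intervalIntegral.integral_const_mul]
  have hmain : V (x t) t = (1/2) * (∫ s in t..T, u s ⬝ᵥ u s) + V (x T) T
      - (1/2) * (∫ s in t..T, h s) := by
    rw [hsplit] at hFTC; linarith
  have hnonneg : 0 ≤ᵐ[MeasureTheory.volume.restrict (Set.Ioc t T)] h :=
    Filter.Eventually.of_forall fun s => dotSelf_nonneg _
  constructor
  · intro heq s hs
    have hizero : (∫ s in t..T, h s) = 0 := by linarith
    have hae : h =ᵐ[MeasureTheory.volume.restrict (Set.Ioc t T)] 0 :=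
      (intervalIntegral.integral_eq_zero_iff_of_le_of_nonneg_ae hT.le hnonneg hInt_h).mp
        hizero
    have hae' : h =ᵐ[MeasureTheory.volume.restrict (Set.Icc t T)] 0 := by
      rwa [← MeasureTheory.Measure.restrict_congr_set MeasureTheory.Ioc_ae_eq_Icc]
    have hsubcl : Set.Icc t T ⊆ closure (interior (Set.Icc t T)) := by
      rw [interior_Icc, closure_Ioo hT.ne]
    have hzero : Set.EqOn h 0 (Set.Icc t T) :=
      MeasureTheory.Measure.eqOn_of_ae_eq hae' hhc continuousOn_const hsubcl
    have : u s + w s = 0 := dotProduct_self_eq_zero.mp (hzero hs)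
    have := eq_neg_of_add_eq_zero_left this
    rw [this, hw]
  · intro hfb
    have hzero : Set.EqOn h 0 (Set.uIcc t T) := by
      rw [hicc]; intro s hs
      show h s = (0 : ℝ → ℝ) s
      have h0 : u s + w s = 0 := by rw [hfb s hs]; simp [hw]
      simp only [hhdef, Pi.zero_apply]
      rw [h0, zero_dotProduct]
    have hizero : (∫ s in t..T, h s) = 0 := by
      rw [intervalIntegral.integral_congr hzero]; simp
    linarith
end

section
/- Let A ∈ ℝ^{n×n} be Hurwitz, i.e. every eigenvalue of A (regarded as a complex matrix) has strictly negative real part, and let C ∈ ℝ^{n×m}. Then the integral Σ := ∫₀^∞ e^{sA} C Cᵀ e^{sAᵀ} ds converges, Σ is symmetric positive semidefinite, Σ satisfies the Lyapunov equation AΣ + ΣAᵀ = −CCᵀ, and Σ is the unique solution: any matrix X ∈ ℝ^{n×n} with AX + XAᵀ = −CCᵀ equals Σ. -/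
open Matrix MeasureTheory

/-- The controllability Gramian `∫₀^∞ e^{sA} C Cᵀ e^{sAᵀ} ds`, defined entrywise. -/
noncomputable def controllabilityGramian (n m : ℕ)
    (A : Matrix (Fin n) (Fin n) ℝ) (C : Matrix (Fin n) (Fin m) ℝ) :
    Matrix (Fin n) (Fin n) ℝ :=
  Matrix.of fun i j => ∫ s in Set.Ioi (0 : ℝ),
    (NormedSpace.exp (s • A) * (C * Cᵀ) * NormedSpace.exp (s • Aᵀ)) i j

section Aux

open NormedSpace Filter Set
open scoped Topology Nat NNReal

attribute [local instance] Matrix.linftyOpNormedAddCommGroup Matrix.linftyOpNormedRing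
  Matrix.linftyOpNormedAlgebra

variable {n : ℕ}

/-- norm bound from entrywise bounds, for the linfty operator norm. -/
lemma norm_le_card_mul_of_entries (M : Matrix (Fin n) (Fin n) ℝ) {c : ℝ} (hc : 0 ≤ c)
    (h : ∀ i j, |M i j| ≤ c) : ‖M‖ ≤ n * c := by
  have h1 : ‖M‖₊ ≤ (n : ℝ≥0) * ‖c‖₊ := by
    rw [Matrix.linfty_opNNNorm_def]
    refine Finset.sup_le fun i _ => ?_
    calc (∑ j, ‖M i j‖₊) ≤ ∑ _j : Fin n, ‖c‖₊ := by
          refine Finset.sum_le_sum fun j _ => ?_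
          rw [← NNReal.coe_le_coe, coe_nnnorm, coe_nnnorm, Real.norm_eq_abs, Real.norm_eq_abs,
            abs_of_nonneg hc]
          exact h i j
      _ = (n : ℝ≥0) * ‖c‖₊ := by simp [Finset.sum_const, mul_comm]
  calc ‖M‖ = ((‖M‖₊ : ℝ≥0) : ℝ) := rfl
    _ ≤ (((n : ℝ≥0) * ‖c‖₊ : ℝ≥0) : ℝ) := NNReal.coe_le_coe.mpr h1
    _ = n * c := by
        push_cast
        rw [Real.norm_eq_abs, abs_of_nonneg hc]

lemma spectrum_transpose (M : Matrix (Fin n) (Fin n) ℂ) :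
    spectrum ℂ Mᵀ = spectrum ℂ M := by
  ext μ
  have key : ∀ N : Matrix (Fin n) (Fin n) ℂ, IsUnit Nᵀ ↔ IsUnit N := by
    intro N
    rw [Matrix.isUnit_iff_isUnit_det, Matrix.isUnit_iff_isUnit_det, Matrix.det_transpose]
  have h : algebraMap ℂ (Matrix (Fin n) (Fin n) ℂ) μ - Mᵀ
      = (algebraMap ℂ (Matrix (Fin n) (Fin n) ℂ) μ - M)ᵀ := by
    rw [Matrix.transpose_sub, Algebra.algebraMap_eq_smul_one, Matrix.transpose_smul,
      Matrix.transpose_one]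
  simp only [spectrum.mem_iff, h, key]

/-- Evaluating the exponential series on a vector killed by `N ^ k`. -/
lemma exp_mulVec_nilpotent {n : ℕ} (N : Matrix (Fin n) (Fin n) ℂ) (v : Fin n → ℂ) (k : ℕ)
    (hNl : ∀ l, k ≤ l → (N ^ l) *ᵥ v = 0) (c : ℂ) :
    exp (c • N) *ᵥ v
      = ∑ j ∈ Finset.range k, (((j ! : ℂ))⁻¹ * c ^ j) • ((N ^ j) *ᵥ v) := by
  let Lv : Matrix (Fin n) (Fin n) ℂ →ₗ[ℂ] (Fin n → ℂ) :=
    { toFun := fun M => M *ᵥ v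
      map_add' := fun M₁ M₂ => Matrix.add_mulVec M₁ M₂ v
      map_smul' := fun a M => Matrix.smul_mulVec a M v }
  let LvL : Matrix (Fin n) (Fin n) ℂ →L[ℂ] (Fin n → ℂ) := LinearMap.toContinuousLinearMap Lv
  have h1 : exp (c • N) *ᵥ v = ∑' j : ℕ, ((j ! : ℂ))⁻¹ • ((c • N) ^ j *ᵥ v) := by
    have h2 : LvL (exp (c • N)) = ∑' j : ℕ, LvL (((j ! : ℂ))⁻¹ • (c • N) ^ j) := by
      rw [exp_eq_tsum ℂ]
      exact LvL.map_tsum (expSeries_summable' (𝕂 := ℂ) (c • N))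
    have h3 : ∀ j : ℕ, LvL (((j ! : ℂ))⁻¹ • ((c • N)) ^ j)
        = ((j ! : ℂ))⁻¹ • ((c • N) ^ j *ᵥ v) := fun j => LvL.map_smul _ _
    simp [h3] at h2; exact h2
  have hcut : (∑' j : ℕ, ((j ! : ℂ))⁻¹ • ((c • N) ^ j *ᵥ v))
      = ∑ j ∈ Finset.range k, ((j ! : ℂ))⁻¹ • ((c • N) ^ j *ᵥ v) := by
    refine tsum_eq_sum fun j hj => ?_
    rw [smul_pow, Matrix.smul_mulVec, hNl j (by simpa using hj)]
    simp
  rw [h1, hcut]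
  refine Finset.sum_congr rfl fun j _ => ?_
  rw [smul_pow, Matrix.smul_mulVec, smul_smul]

/-- Exponential decay of `e^{sA}` for Hurwitz `A`. -/
lemma exists_exp_decay (A : Matrix (Fin n) (Fin n) ℝ)
    (hA : ∀ μ ∈ spectrum ℂ (A.map Complex.ofReal), μ.re < 0) :
    ∃ K ε : ℝ, 0 < ε ∧ 0 ≤ K ∧ ∀ s : ℝ, 0 ≤ s →
      ‖exp (s • A)‖ ≤ K * Real.exp (-ε * s) := by
  classical
  set B : Matrix (Fin n) (Fin n) ℂ := A.map Complex.ofReal with hB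
  -- choose a uniform spectral gap
  obtain ⟨ε, hε, hspec⟩ : ∃ ε : ℝ, 0 < ε ∧ ∀ μ ∈ spectrum ℂ B, μ.re ≤ -(2 * ε) := by
    rcases (spectrum ℂ B).eq_empty_or_nonempty with h | h
    · exact ⟨1, one_pos, fun μ hμ => by simp [h] at hμ⟩
    · set F := (Matrix.finite_spectrum B).toFinset with hF
      have hFne : F.Nonempty := by
        rwa [hF, Set.Finite.toFinset_nonempty]
      refine ⟨(F.inf' hFne fun μ => -μ.re) / 4, ?_, fun μ hμ => ?_⟩
      · have : 0 < F.inf' hFne fun μ => -μ.re := by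
          rw [Finset.lt_inf'_iff]
          intro μ hμ
          have := hA μ (by simpa [hF, Set.Finite.mem_toFinset] using hμ)
          linarith
        linarith
      · have h1 : (F.inf' hFne fun μ => -μ.re) ≤ -μ.re :=
          Finset.inf'_le _ (by simpa [hF, Set.Finite.mem_toFinset] using hμ)
        have h2 : 0 < F.inf' hFne fun μ => -μ.re := by
          rw [Finset.lt_inf'_iff]
          intro ν hν
          have := hA ν (by simpa [hF, Set.Finite.mem_toFinset] using hν)
          linarith
        linarith
  -- vectors with exponentially decaying orbits form a submodule
  let P : Submodule ℂ (Fin n → ℂ) :=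
  { carrier := {v | ∃ Cv : ℝ, 0 ≤ Cv ∧ ∀ s : ℝ, 0 ≤ s →
      ‖exp ((s : ℂ) • B) *ᵥ v‖ ≤ Cv * Real.exp (-ε * s)}
    add_mem' := by
      rintro v w ⟨Cv, hCv, hv⟩ ⟨Cw, hCw, hw⟩
      refine ⟨Cv + Cw, by linarith, fun s hs => ?_⟩
      rw [Matrix.mulVec_add]
      calc ‖_ + _‖ ≤ _ := norm_add_le _ _
        _ ≤ Cv * Real.exp (-ε * s) + Cw * Real.exp (-ε * s) := add_le_add (hv s hs) (hw s hs)
        _ = (Cv + Cw) * Real.exp (-ε * s) := (add_mul _ _ _).symm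
    zero_mem' := ⟨0, le_refl 0, fun s hs => by simp⟩
    smul_mem' := by
      rintro c v ⟨Cv, hCv, hv⟩
      refine ⟨‖c‖ * Cv, by positivity, fun s hs => ?_⟩
      rw [Matrix.mulVec_smul, norm_smul, mul_assoc]
      exact mul_le_mul_of_nonneg_left (hv s hs) (norm_nonneg c) }
  -- every generalized eigenvector decays
  have hP : ∀ v : Fin n → ℂ, v ∈ P := by
    have htop : (⊤ : Submodule ℂ (Fin n → ℂ)) ≤ P := by
      rw [← Module.End.iSup_maxGenEigenspace_eq_top (Matrix.toLinAlgEquiv' B)]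
      refine iSup_le fun μ v hv => ?_
      rcases eq_or_ne v 0 with rfl | hv0
      · exact P.zero_mem
      rw [Module.End.mem_maxGenEigenspace] at hv
      obtain ⟨k, hk⟩ := hv
      -- μ is in the spectrum
      have hμmem : μ ∈ spectrum ℂ B := by
        rw [← AlgEquiv.spectrum_eq
          (Matrix.toLinAlgEquiv' : Matrix (Fin n) (Fin n) ℂ ≃ₐ[ℂ] _) B]
        by_contra hcon
        rw [spectrum.notMem_iff] at hcon
        have h1 : IsUnit ((Matrix.toLinAlgEquiv' B - μ • 1) ^ k) := by
          refine IsUnit.pow k ?_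
          have := hcon.neg
          rw [neg_sub, Module.algebraMap_end_eq_smul_id] at this
          exact this
        obtain ⟨u, hu⟩ := h1
        apply hv0
        calc v = ((↑u⁻¹ * ↑u : Module.End ℂ (Fin n → ℂ))) v := by
              rw [Units.inv_mul]; rfl
          _ = (↑u⁻¹ : Module.End ℂ (Fin n → ℂ)) ((↑u : Module.End ℂ (Fin n → ℂ)) v) := rfl
          _ = (↑u⁻¹ : Module.End ℂ (Fin n → ℂ)) 0 := by rw [hu, hk]
          _ = 0 := map_zero _
      have hre : μ.re ≤ -(2 * ε) := hspec μ hμmem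
      -- translate nilpotency to matrices
      set N : Matrix (Fin n) (Fin n) ℂ := B - μ • 1 with hN
      have hkN : (N ^ k) *ᵥ v = 0 := by
        have ht : (Matrix.toLinAlgEquiv' B - μ • 1) ^ k = Matrix.toLinAlgEquiv' (N ^ k) := by
          rw [map_pow]
          congr 1
          rw [map_sub, _root_.map_smul, _root_.map_one]
        rw [ht] at hk
        rwa [Matrix.toLinAlgEquiv'_apply] at hk
      have hNl : ∀ l, k ≤ l → (N ^ l) *ᵥ v = 0 := by
        intro l hl
        rw [← Nat.sub_add_cancel hl, pow_add, ← Matrix.mulVec_mulVec, hkN, Matrix.mulVec_zero]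
      -- split the exponential
      have hsplit : ∀ s : ℝ,
          exp ((s : ℂ) • B) = Complex.exp ((s : ℂ) * μ) • exp ((s : ℂ) • N) := by
        intro s
        have h1 : (s : ℂ) • B = (s : ℂ) • (μ • (1 : Matrix (Fin n) (Fin n) ℂ)) + (s : ℂ) • N := by
          rw [← smul_add, hN, add_sub_cancel]
        have hcomm : Commute ((s : ℂ) • (μ • (1 : Matrix (Fin n) (Fin n) ℂ))) ((s : ℂ) • N) :=
          (((Commute.one_left N).smul_left μ).smul_left (s : ℂ)).smul_right (s : ℂ)
        rw [h1, Matrix.exp_add_of_commute _ _ hcomm]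
        have h2 : (s : ℂ) • μ • (1 : Matrix (Fin n) (Fin n) ℂ)
            = algebraMap ℂ (Matrix (Fin n) (Fin n) ℂ) ((s : ℂ) * μ) := by
          rw [smul_smul, Algebra.algebraMap_eq_smul_one]
        rw [h2]; erw [← algebraMap_exp_comm]; rw [← Complex.exp_eq_exp_ℂ, ← Algebra.smul_def]
      -- series evaluation on a generalized eigenvector
      have hser : ∀ s : ℝ, exp ((s : ℂ) • N) *ᵥ v
          = ∑ j ∈ Finset.range k, (((j ! : ℂ))⁻¹ * (s : ℂ) ^ j) • ((N ^ j) *ᵥ v) :=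
        fun s => exp_mulVec_nilpotent N v k hNl (s : ℂ)
      -- the bound
      refine ⟨∑ j ∈ Finset.range k, ε⁻¹ ^ j * ‖(N ^ j) *ᵥ v‖, by positivity, fun s hs => ?_⟩
      rw [hsplit s, Matrix.smul_mulVec, norm_smul]
      have habs : ‖Complex.exp ((s : ℂ) * μ)‖ = Real.exp (s * μ.re) := by
        rw [Complex.norm_exp]
        congr 1
        simp [Complex.mul_re]
      rw [habs, hser s]
      have hterm : ∀ j ∈ Finset.range k,
          ‖(((j ! : ℂ))⁻¹ * (s : ℂ) ^ j) • ((N ^ j) *ᵥ v)‖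
            ≤ (Real.exp (ε * s) * ε⁻¹ ^ j) * ‖(N ^ j) *ᵥ v‖ := by
        intro j _
        rw [norm_smul]
        refine mul_le_mul_of_nonneg_right ?_ (norm_nonneg _)
        have h4 : ‖((j ! : ℂ))⁻¹ * (s : ℂ) ^ j‖ = s ^ j / j ! := by
          rw [norm_mul, norm_inv, norm_pow, Complex.norm_natCast, Complex.norm_real,
            Real.norm_eq_abs, abs_of_nonneg hs]
          rw [div_eq_inv_mul]
        rw [h4]
        have h5 : (ε * s) ^ j / j ! ≤ Real.exp (ε * s) := by
          have h6 := Real.sum_le_exp_of_nonneg (x := ε * s) (by positivity) (j + 1)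
          refine le_trans ?_ h6
          exact Finset.single_le_sum (f := fun i => (ε * s) ^ i / i !)
            (fun i _ => by positivity) (Finset.self_mem_range_succ j)
        have h7 : s ^ j / j ! = ε⁻¹ ^ j * ((ε * s) ^ j / j !) := by
          rw [mul_pow, ← mul_div_assoc, ← mul_assoc, ← mul_pow, inv_mul_cancel₀ hε.ne',
            one_pow, one_mul]
        rw [h7, mul_comm (Real.exp (ε * s))]
        exact mul_le_mul_of_nonneg_left h5 (by positivity)
      calc Real.exp (s * μ.re) * ‖∑ j ∈ Finset.range k,
            (((j ! : ℂ))⁻¹ * (s : ℂ) ^ j) • ((N ^ j) *ᵥ v)‖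
          ≤ Real.exp (s * μ.re) * ∑ j ∈ Finset.range k,
            (Real.exp (ε * s) * ε⁻¹ ^ j) * ‖(N ^ j) *ᵥ v‖ := by
            refine mul_le_mul_of_nonneg_left ?_ (Real.exp_nonneg _)
            exact le_trans (norm_sum_le _ _) (Finset.sum_le_sum hterm)
        _ = (Real.exp (s * μ.re) * Real.exp (ε * s)) *
            ∑ j ∈ Finset.range k, ε⁻¹ ^ j * ‖(N ^ j) *ᵥ v‖ := by
            rw [Finset.mul_sum, Finset.mul_sum]
            refine Finset.sum_congr rfl fun j _ => by ring
        _ ≤ (Real.exp (-(2 * ε) * s) * Real.exp (ε * s)) *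
            ∑ j ∈ Finset.range k, ε⁻¹ ^ j * ‖(N ^ j) *ᵥ v‖ := by
            refine mul_le_mul_of_nonneg_right ?_ (by positivity)
            refine mul_le_mul_of_nonneg_right ?_ (Real.exp_nonneg _)
            exact Real.exp_le_exp.mpr (by nlinarith)
        _ = (∑ j ∈ Finset.range k, ε⁻¹ ^ j * ‖(N ^ j) *ᵥ v‖) * Real.exp (-ε * s) := by
            rw [← Real.exp_add, show -(2 * ε) * s + ε * s = -ε * s by ring, mul_comm]
    intro v
    exact htop Submodule.mem_top
  -- entrywise decay for the real exponential
  have hmap : ∀ s : ℝ, (exp (s • A)).map Complex.ofReal = exp ((s : ℂ) • B) := by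
    intro s
    have hcont : Continuous fun M : Matrix (Fin n) (Fin n) ℝ => M.map (Complex.ofReal ·) :=
      Continuous.matrix_map continuous_id Complex.continuous_ofReal
    have h1 := map_exp (Complex.ofRealHom.mapMatrix :
      Matrix (Fin n) (Fin n) ℝ →+* Matrix (Fin n) (Fin n) ℂ) (by exact hcont) (s • A)
    have h2 : Complex.ofRealHom.mapMatrix (s • A) = (s : ℂ) • B := by
      ext i j
      simp only [RingHom.mapMatrix_apply, Matrix.map_apply, Matrix.smul_apply, smul_eq_mul,
        Complex.real_smul, hB, Complex.ofRealHom_eq_coe, Complex.ofReal_mul]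
    have h3 : (exp (s • A)).map Complex.ofReal = Complex.ofRealHom.mapMatrix (exp (s • A)) :=
      rfl
    rw [h3, ← h2]; exact h1
  choose Cv hCv0 hCv using fun j : Fin n => hP (Pi.single j 1)
  refine ⟨n * ∑ j, Cv j, ε, hε, mul_nonneg (Nat.cast_nonneg n)
    (Finset.sum_nonneg fun j _ => hCv0 j), fun s hs => ?_⟩
  have hentry : ∀ i j, |(exp (s • A)) i j| ≤ (∑ j', Cv j') * Real.exp (-ε * s) := by
    intro i j
    have h1 : ((exp (s • A)) i j : ℂ) = (exp ((s : ℂ) • B)) i j := by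
      rw [← hmap s]; rfl
    have h2 : ‖(exp ((s : ℂ) • B)) i j‖ ≤ Cv j * Real.exp (-ε * s) := by
      have h4 : (exp ((s : ℂ) • B) *ᵥ Pi.single j 1) i = (exp ((s : ℂ) • B)) i j := by
        simp [Matrix.mulVec_single]
      calc ‖(exp ((s : ℂ) • B)) i j‖
          = ‖(exp ((s : ℂ) • B) *ᵥ Pi.single j 1) i‖ := by rw [h4]
        _ ≤ ‖exp ((s : ℂ) • B) *ᵥ Pi.single j 1‖ := norm_le_pi_norm _ i
        _ ≤ Cv j * Real.exp (-ε * s) := hCv j s hs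
    have h5 : |(exp (s • A)) i j| = ‖((exp (s • A)) i j : ℂ)‖ := by
      rw [Complex.norm_real, Real.norm_eq_abs]
    rw [h5, h1]
    refine h2.trans (mul_le_mul_of_nonneg_right ?_ (Real.exp_nonneg _))
    exact Finset.single_le_sum (fun j' _ => hCv0 j') (Finset.mem_univ j)
  have := norm_le_card_mul_of_entries (exp (s • A))
    (c := (∑ j', Cv j') * Real.exp (-ε * s))
    (mul_nonneg (Finset.sum_nonneg fun j' _ => hCv0 j') (Real.exp_nonneg _)) hentry
  calc ‖exp (s • A)‖ ≤ n * ((∑ j', Cv j') * Real.exp (-ε * s)) := this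
    _ = (n * ∑ j, Cv j) * Real.exp (-ε * s) := by ring

end Aux

open NormedSpace

set_option maxHeartbeats 1000000 in
/-- For a Hurwitz matrix `A` and any `C`, the Gramian `Σ = ∫₀^∞ e^{sA} C Cᵀ e^{sAᵀ} ds`
converges (entrywise), is symmetric positive semidefinite, solves the Lyapunov equation
`AΣ + ΣAᵀ = -CCᵀ`, and is its unique solution. -/
theorem lyapunov_equation_unique_solution
    (n m : ℕ) (A : Matrix (Fin n) (Fin n) ℝ) (C : Matrix (Fin n) (Fin m) ℝ)
    -- `A` is Hurwitz: all eigenvalues of `A` as a complex matrix have negative real part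
    (hA : ∀ μ ∈ spectrum ℂ (A.map Complex.ofReal), μ.re < 0) :
    (∀ i j, IntegrableOn
        (fun s : ℝ =>
          (NormedSpace.exp (s • A) * (C * Cᵀ) * NormedSpace.exp (s • Aᵀ)) i j)
        (Set.Ioi (0 : ℝ))) ∧
      (controllabilityGramian n m A C).PosSemidef ∧
      A * controllabilityGramian n m A C + controllabilityGramian n m A C * Aᵀ
        = -(C * Cᵀ) ∧
      ∀ X : Matrix (Fin n) (Fin n) ℝ,
        A * X + X * Aᵀ = -(C * Cᵀ) → X = controllabilityGramian n m A C := by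
  classical
  letI : NormedAddCommGroup (Matrix (Fin n) (Fin n) ℝ) := Matrix.linftyOpNormedAddCommGroup
  letI : NormedRing (Matrix (Fin n) (Fin n) ℝ) := Matrix.linftyOpNormedRing
  letI : NormedAlgebra ℝ (Matrix (Fin n) (Fin n) ℝ) := Matrix.linftyOpNormedAlgebra
  letI : NormedAlgebra ℚ (Matrix (Fin n) (Fin n) ℝ) := Matrix.linftyOpNormedAlgebra
  letI : TopologicalSpace (Matrix (Fin n) (Fin n) ℝ) :=
    PseudoMetricSpace.toUniformSpace.toTopologicalSpace
  -- decay for `A` and for `Aᵀ`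
  obtain ⟨K₁, ε₁, hε₁, hK₁, hd₁⟩ := exists_exp_decay A hA
  have hAT : ∀ μ ∈ spectrum ℂ (Aᵀ.map Complex.ofReal), μ.re < 0 := by
    intro μ hμ
    refine hA μ ?_
    rwa [Matrix.transpose_map, spectrum_transpose] at hμ
  obtain ⟨K₂, ε₂, hε₂, hK₂, hd₂⟩ := exists_exp_decay Aᵀ hAT
  set Mfun : ℝ → Matrix (Fin n) (Fin n) ℝ :=
    fun s => exp (s • A) * (C * Cᵀ) * exp (s • Aᵀ) with hMfun
  have hcont1 : Continuous fun s : ℝ => exp (s • A) :=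
    exp_continuous.comp (continuous_id.smul continuous_const)
  have hcont2 : Continuous fun s : ℝ => exp (s • Aᵀ) :=
    exp_continuous.comp (continuous_id.smul continuous_const)
  have hcont : Continuous Mfun := ((hcont1.mul continuous_const).mul hcont2)
  set ε' : ℝ := ε₁ + ε₂ with hε'
  set K' : ℝ := K₁ * ‖C * Cᵀ‖ * K₂ with hK'
  have hε'pos : 0 < ε' := by positivity
  have hK'0 : 0 ≤ K' := by positivity
  have hnorm : ∀ s : ℝ, 0 ≤ s → ‖Mfun s‖ ≤ K' * Real.exp (-ε' * s) := by
    intro s hs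
    calc ‖Mfun s‖ ≤ ‖exp (s • A) * (C * Cᵀ)‖ * ‖exp (s • Aᵀ)‖ := norm_mul_le _ _
      _ ≤ (‖exp (s • A)‖ * ‖C * Cᵀ‖) * ‖exp (s • Aᵀ)‖ :=
          mul_le_mul_of_nonneg_right (norm_mul_le _ _) (norm_nonneg _)
      _ ≤ ((K₁ * Real.exp (-ε₁ * s)) * ‖C * Cᵀ‖) * (K₂ * Real.exp (-ε₂ * s)) := by
          refine mul_le_mul ?_ (hd₂ s hs) (norm_nonneg _) (by positivity)
          exact mul_le_mul_of_nonneg_right (hd₁ s hs) (norm_nonneg _)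
      _ = K' * Real.exp (-ε' * s) := by
          rw [hK', hε']
          rw [show -(ε₁ + ε₂) * s = -ε₁ * s + -ε₂ * s by ring, Real.exp_add]
          ring
  -- integrability of the matrix-valued integrand
  have hIntBound : IntegrableOn (fun s : ℝ => K' * Real.exp (-ε' * s)) (Set.Ioi (0 : ℝ)) :=
    (exp_neg_integrableOn_Ioi 0 hε'pos).const_mul K'
  have hInt : IntegrableOn Mfun (Set.Ioi (0 : ℝ)) := by
    refine Integrable.mono' hIntBound hcont.aestronglyMeasurable.restrict ?_
    filter_upwards [ae_restrict_mem measurableSet_Ioi] with s hs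
    exact hnorm s (le_of_lt hs)
  -- entry evaluation CLM
  let entryCLM : Fin n → Fin n → (Matrix (Fin n) (Fin n) ℝ →L[ℝ] ℝ) := fun i j =>
    LinearMap.toContinuousLinearMap
      { toFun := fun M => M i j
        map_add' := fun _ _ => rfl
        map_smul' := fun _ _ => rfl }
  have hIntEntry : ∀ i j, IntegrableOn (fun s : ℝ => (Mfun s) i j) (Set.Ioi (0 : ℝ)) :=
    fun i j => (entryCLM i j).integrable_comp hInt
  set Sig : Matrix (Fin n) (Fin n) ℝ := ∫ s in Set.Ioi (0 : ℝ), Mfun s with hSig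
  have hGram : controllabilityGramian n m A C = Sig := by
    ext i j
    exact ((entryCLM i j).integral_comp_comm hInt)
  -- derivative of s ↦ e^{sA} X e^{sAᵀ}
  have hderivGen : ∀ (X : Matrix (Fin n) (Fin n) ℝ) (s : ℝ),
      HasDerivAt (fun t : ℝ => exp (t • A) * X * exp (t • Aᵀ))
        (A * (exp (s • A) * X * exp (s • Aᵀ))
          + (exp (s • A) * X * exp (s • Aᵀ)) * Aᵀ) s := by
    intro X s
    have h1 : HasDerivAt (fun t : ℝ => exp (t • A)) (A * exp (s • A)) s :=
      hasDerivAt_exp_smul_const' A s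
    have h2 : HasDerivAt (fun t : ℝ => exp (t • Aᵀ)) (exp (s • Aᵀ) * Aᵀ) s :=
      hasDerivAt_exp_smul_const Aᵀ s
    have h3 := (h1.mul_const X).mul h2
    refine h3.congr_deriv ?_
    simp only [mul_assoc, mul_add, add_mul]
  have hcommA : ∀ s : ℝ, A * exp (s • A) = exp (s • A) * A := fun s =>
    (((Commute.refl A).smul_right s).exp_right).eq
  have hcommAT : ∀ s : ℝ, Aᵀ * exp (s • Aᵀ) = exp (s • Aᵀ) * Aᵀ := fun s =>
    (((Commute.refl Aᵀ).smul_right s).exp_right).eq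
  have halg : ∀ (E₁ E₂ X : Matrix (Fin n) (Fin n) ℝ), A * E₁ = E₁ * A → Aᵀ * E₂ = E₂ * Aᵀ →
      A * (E₁ * X * E₂) + (E₁ * X * E₂) * Aᵀ = E₁ * (A * X + X * Aᵀ) * E₂ := by
    intro E₁ E₂ X h1 h2
    rw [mul_add, add_mul]
    congr 1
    · rw [← mul_assoc, ← mul_assoc, h1, mul_assoc E₁ A X]
    · rw [mul_assoc (E₁ * X) E₂ Aᵀ, ← h2, ← mul_assoc, mul_assoc E₁ X Aᵀ]
  have hmiddle : ∀ (X : Matrix (Fin n) (Fin n) ℝ) (s : ℝ),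
      A * (exp (s • A) * X * exp (s • Aᵀ))
        + (exp (s • A) * X * exp (s • Aᵀ)) * Aᵀ
      = exp (s • A) * (A * X + X * Aᵀ) * exp (s • Aᵀ) :=
    fun X s => halg _ _ X (hcommA s) (hcommAT s)
  -- limits at infinity
  have htendGen : ∀ X : Matrix (Fin n) (Fin n) ℝ,
      Filter.Tendsto (fun s : ℝ => exp (s • A) * X * exp (s • Aᵀ))
        Filter.atTop (nhds 0) := by
    intro X
    have hb : Filter.Tendsto (fun s : ℝ => (K₁ * ‖X‖ * K₂) * Real.exp (-(ε₁ + ε₂) * s))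
        Filter.atTop (nhds 0) := by
      have h1 : Filter.Tendsto (fun s : ℝ => -(ε₁ + ε₂) * s) Filter.atTop Filter.atBot := by
        apply Filter.Tendsto.const_mul_atTop_of_neg
        · linarith
        · exact Filter.tendsto_id
      have h2 := Real.tendsto_exp_atBot.comp h1
      simpa using h2.const_mul (K₁ * ‖X‖ * K₂)
    refine squeeze_zero_norm' ?_ hb
    filter_upwards [Filter.eventually_ge_atTop (0 : ℝ)] with s hs
    calc ‖exp (s • A) * X * exp (s • Aᵀ)‖
        ≤ (‖exp (s • A)‖ * ‖X‖) * ‖exp (s • Aᵀ)‖ :=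
          le_trans (norm_mul_le _ _)
            (mul_le_mul_of_nonneg_right (norm_mul_le _ _) (norm_nonneg _))
      _ ≤ ((K₁ * Real.exp (-ε₁ * s)) * ‖X‖) * (K₂ * Real.exp (-ε₂ * s)) := by
          refine mul_le_mul ?_ (hd₂ s hs) (norm_nonneg _) (by positivity)
          exact mul_le_mul_of_nonneg_right (hd₁ s hs) (norm_nonneg _)
      _ = (K₁ * ‖X‖ * K₂) * Real.exp (-(ε₁ + ε₂) * s) := by
          rw [show -(ε₁ + ε₂) * s = -ε₁ * s + -ε₂ * s by ring, Real.exp_add]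
          ring
  -- value at 0
  have hzero : ∀ X : Matrix (Fin n) (Fin n) ℝ,
      exp ((0 : ℝ) • A) * X * exp ((0 : ℝ) • Aᵀ) = X := by
    intro X
    rw [zero_smul, zero_smul, exp_zero, one_mul, mul_one]
  -- the FTC computation, for any X with AX + XAᵀ = -(CCᵀ) plus X = CCᵀ itself
  have hFTC : ∀ X : Matrix (Fin n) (Fin n) ℝ,
      (∫ s in Set.Ioi (0 : ℝ), exp (s • A) * (A * X + X * Aᵀ) * exp (s • Aᵀ)) = -X := by
    intro X
    have h := integral_Ioi_of_hasDerivAt_of_tendsto'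
      (f := fun s : ℝ => exp (s • A) * X * exp (s • Aᵀ))
      (f' := fun s : ℝ => exp (s • A) * (A * X + X * Aᵀ) * exp (s • Aᵀ))
      (a := 0) (m := 0)
      (fun s _ => by have hh := hderivGen X s; rwa [hmiddle X s] at hh) ?_ (htendGen X)
    · rw [h]
      simp only [zero_smul, exp_zero, one_mul, mul_one, zero_sub]
    · -- integrability of the derivative
      have hbnd : IntegrableOn
          (fun s : ℝ => (K₁ * ‖A * X + X * Aᵀ‖ * K₂) * Real.exp (-(ε₁ + ε₂) * s))
          (Set.Ioi (0 : ℝ)) :=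
        (exp_neg_integrableOn_Ioi 0 (by linarith)).const_mul _
    
      refine Integrable.mono' hbnd ?_ ?_
      · exact (Continuous.aestronglyMeasurable
          ((hcont1.mul continuous_const).mul hcont2)).restrict
      · filter_upwards [ae_restrict_mem measurableSet_Ioi] with s hs
        have hs0 : (0 : ℝ) ≤ s := le_of_lt hs
        calc ‖exp (s • A) * (A * X + X * Aᵀ) * exp (s • Aᵀ)‖
            ≤ (‖exp (s • A)‖ * ‖A * X + X * Aᵀ‖) * ‖exp (s • Aᵀ)‖ :=
              le_trans (norm_mul_le _ _)
                (mul_le_mul_of_nonneg_right (norm_mul_le _ _) (norm_nonneg _))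
          _ ≤ ((K₁ * Real.exp (-ε₁ * s)) * ‖A * X + X * Aᵀ‖) * (K₂ * Real.exp (-ε₂ * s)) := by
              refine mul_le_mul ?_ (hd₂ s hs0) (norm_nonneg _) (by positivity)
              exact mul_le_mul_of_nonneg_right (hd₁ s hs0) (norm_nonneg _)
          _ = (K₁ * ‖A * X + X * Aᵀ‖ * K₂) * Real.exp (-(ε₁ + ε₂) * s) := by
              rw [show -(ε₁ + ε₂) * s = -ε₁ * s + -ε₂ * s by ring, Real.exp_add]
              ring
  -- Lyapunov equation for Sig
  have hLyap : A * Sig + Sig * Aᵀ = -(C * Cᵀ) := by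
    have h0 := hFTC (C * Cᵀ)
    have hmul : ∀ s : ℝ, exp (s • A) * (A * (C * Cᵀ) + (C * Cᵀ) * Aᵀ) * exp (s • Aᵀ)
        = A * Mfun s + Mfun s * Aᵀ := fun s => (hmiddle (C * Cᵀ) s).symm
    rw [show (fun s : ℝ => exp (s • A) * (A * (C * Cᵀ) + (C * Cᵀ) * Aᵀ) * exp (s • Aᵀ))
      = fun s : ℝ => A * Mfun s + Mfun s * Aᵀ from funext hmul] at h0
    set L : Matrix (Fin n) (Fin n) ℝ →L[ℝ] Matrix (Fin n) (Fin n) ℝ :=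
      ContinuousLinearMap.mul ℝ (Matrix (Fin n) (Fin n) ℝ) A with hL
    set R : Matrix (Fin n) (Fin n) ℝ →L[ℝ] Matrix (Fin n) (Fin n) ℝ :=
      (ContinuousLinearMap.mul ℝ (Matrix (Fin n) (Fin n) ℝ)).flip Aᵀ with hR
    have hLint : IntegrableOn (fun s : ℝ => A * Mfun s) (Set.Ioi (0 : ℝ)) :=
      L.integrable_comp hInt
    have hRint : IntegrableOn (fun s : ℝ => Mfun s * Aᵀ) (Set.Ioi (0 : ℝ)) :=
      R.integrable_comp hInt
    rw [integral_add hLint hRint] at h0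
    have hLc : (∫ s in Set.Ioi (0 : ℝ), A * Mfun s) = A * Sig := by
      have := L.integral_comp_comm hInt
      exact this
    have hRc : (∫ s in Set.Ioi (0 : ℝ), Mfun s * Aᵀ) = Sig * Aᵀ := by
      have := R.integral_comp_comm hInt
      exact this
    rw [hLc, hRc] at h0
    exact h0
  refine ⟨hIntEntry, ?_, ?_, ?_⟩
  · -- positive semidefinite
    rw [hGram]
    refine Matrix.posSemidef_iff_dotProduct_mulVec.mpr ⟨?_, ?_⟩
    · -- Hermitian
      have hsymm : ∀ s : ℝ, (Mfun s)ᵀ = Mfun s := by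
        intro s
        show (exp (s • A) * (C * Cᵀ) * exp (s • Aᵀ))ᵀ
          = exp (s • A) * (C * Cᵀ) * exp (s • Aᵀ)
        rw [Matrix.transpose_mul, Matrix.transpose_mul, Matrix.transpose_mul,
          Matrix.transpose_transpose]; erw [← Matrix.exp_transpose, ← Matrix.exp_transpose]; rw [
          Matrix.transpose_smul, Matrix.transpose_smul, Matrix.transpose_transpose,
          ← mul_assoc]; exact rfl
      show Sigᴴ = Sig
      have hH : Sigᴴ = Sigᵀ := by
        ext i j
        simp [Matrix.conjTranspose_apply]
      rw [hH]
      ext i j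
      show Sig j i = Sig i j
      have hji : Sig j i = ∫ s in Set.Ioi (0 : ℝ), (Mfun s) j i :=
        ((entryCLM j i).integral_comp_comm hInt).symm
      have hij : Sig i j = ∫ s in Set.Ioi (0 : ℝ), (Mfun s) i j :=
        ((entryCLM i j).integral_comp_comm hInt).symm
      rw [hji, hij]
      refine integral_congr_ae (Filter.Eventually.of_forall fun s => ?_)
      show (Mfun s) j i = (Mfun s) i j
      exact congrFun (congrFun (hsymm s) i) j
    · -- nonnegativity
      intro x
      have hstar : (star x : Fin n → ℝ) = x := funext fun i => rfl
      rw [hstar]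
      -- the quadratic form CLM
      let ψ : Matrix (Fin n) (Fin n) ℝ →L[ℝ] ℝ :=
        LinearMap.toContinuousLinearMap
          { toFun := fun M => x ⬝ᵥ (M *ᵥ x)
            map_add' := fun M₁ M₂ => by
              show x ⬝ᵥ ((M₁ + M₂) *ᵥ x) = x ⬝ᵥ (M₁ *ᵥ x) + x ⬝ᵥ (M₂ *ᵥ x)
              rw [Matrix.add_mulVec, dotProduct_add]
            map_smul' := fun c M => by
              show x ⬝ᵥ ((c • M) *ᵥ x) = c • (x ⬝ᵥ (M *ᵥ x))
              rw [Matrix.smul_mulVec, dotProduct_smul] }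
      have hψ : x ⬝ᵥ (Sig *ᵥ x) = ∫ s in Set.Ioi (0 : ℝ), x ⬝ᵥ (Mfun s *ᵥ x) := by
        exact (ψ.integral_comp_comm hInt).symm
      rw [hψ]
      refine setIntegral_nonneg measurableSet_Ioi fun s _ => ?_
      show 0 ≤ x ⬝ᵥ (Mfun s *ᵥ x)
      have hfactor : Mfun s = (exp (s • A) * C) * (exp (s • A) * C)ᵀ := by
        show exp (s • A) * (C * Cᵀ) * exp (s • Aᵀ) = _
        rw [Matrix.transpose_mul]; erw [← Matrix.exp_transpose]; rw [Matrix.transpose_smul]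
        simp only [Matrix.mul_assoc]; exact rfl
      rw [hfactor]
      set P : Matrix (Fin n) (Fin m) ℝ := exp (s • A) * C with hPdef
      have h1 : x ⬝ᵥ ((P * Pᵀ) *ᵥ x) = (Pᵀ *ᵥ x) ⬝ᵥ (Pᵀ *ᵥ x) := by
        rw [← Matrix.mulVec_mulVec, Matrix.dotProduct_mulVec, ← Matrix.mulVec_transpose]
      rw [h1]
      exact Finset.sum_nonneg fun i _ => mul_self_nonneg _
  · -- Lyapunov equation
    rw [hGram]
    exact hLyap
  · -- uniqueness
    intro X hX
    have h0 := hFTC X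
    rw [hX] at h0
    have hneg : (fun s : ℝ => exp (s • A) * (-(C * Cᵀ)) * exp (s • Aᵀ))
        = fun s : ℝ => -(Mfun s) := by
      funext s
      show _ = -(exp (s • A) * (C * Cᵀ) * exp (s • Aᵀ))
      rw [mul_neg, neg_mul]
    rw [hneg] at h0
    rw [integral_neg] at h0
    have hX' : X = Sig := by
      have := neg_injective h0
      exact this.symm
    rw [hX', hGram]
end
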